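/- Let K be an alphabet space and σ: K → K⁺ a primitive generalized substitution. Then for every letter a ∈ K, |σⁿ(a)| → ∞ as n → ∞. -/

import Mathlib

open Set Filter

/-- Return time function `r_A(x) = inf {n > 0 : Tⁿ x ∈ A}`. -/
noncomputable def retTime {α : Type*} (T : α → α) (A : Set α) (x : α) : ℕ :=
  sInf {n : ℕ | 0 < n ∧ T^[n] x ∈ A}

/-- The shift by `n`: `(shiftZ n x) t = x (t + n)`. -/
def shiftZ {A : Type*} (n : ℤ) (x : ℤ → A) : ℤ → A := fun t => x (t + n)

/-- The extension of a substitution to words, by concatenation. -/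
def substWord {A : Type*} (σ : A → List A) (w : List A) : List A :=
  w.foldr (fun a r => σ a ++ r) []

/-- The word `x[i..j]` read off a bi-infinite sequence. -/
def window {A : Type*} (x : ℤ → A) (i j : ℤ) : List A :=
  (List.range (j - i + 1).toNat).map fun t => x (i + t)

section Gen

variable {K : Type*} [MetricSpace K] [CompactSpace K] [TotallyDisconnectedSpace K]
  [Nontrivial K] [Inhabited K]

/-- A generalized substitution: images are nonempty words, the length function is
continuous, and each coordinate projection is continuous where defined. -/
def IsGenSubst (σ : K → List K) : Prop :=
  (∀ a, σ a ≠ []) ∧ Continuous (fun a => (σ a).length) ∧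
    ∀ j : ℕ, ContinuousOn (fun a => (σ a).getD j default) {a | j < (σ a).length}

/-- Primitivity: for every nonempty open `V ⊆ K` there is `j` such that for every
letter `a` and every `k ≥ j`, some letter of `σᵏ(a)` lies in `V`. -/
def GPrimitive (σ : K → List K) : Prop :=
  ∀ V : Set K, IsOpen V → V.Nonempty →
    ∃ j : ℕ, ∀ a : K, ∀ k : ℕ, j ≤ k → ∃ c ∈ (substWord σ)^[k] [a], c ∈ V

/-- Starting position of the `i`-th block in the concatenation `… σ(x₋₁).σ(x₀)σ(x₁) …`. -/
def blockStart (σ : K → List K) (x : ℤ → K) : ℤ → ℤ := fun i =>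
  if 0 ≤ i then (∑ t ∈ Finset.range i.toNat, ((σ (x t)).length : ℤ))
  else -(∑ t ∈ Finset.range (-i).toNat, ((σ (x (-((t : ℤ) + 1)))).length : ℤ))

/-- `E` is the extension of `σ` to bi-infinite sequences: it maps `x` to the
concatenation of the words `σ(x_i)`, with `σ(x₀)` starting at position `0`. -/
def IsSubstExt (σ : K → List K) (E : (ℤ → K) → (ℤ → K)) : Prop :=
  ∀ (x : ℤ → K) (i : ℤ) (j : ℕ), j < (σ (x i)).length →
    E x (blockStart σ x i + j) = (σ (x i)).getD j default

/-- The language generated by a letter `a`: limits of subwords of the `σᵏ(a)`. -/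
def GLang (σ : K → List K) (a : K) : Set (List K) :=
  closure {w : List K | ∃ k : ℕ, w <:+: (substWord σ)^[k] [a]}

/-- The generalized substitution subshift. -/
def GXsub (σ : K → List K) : Set (ℤ → K) :=
  {x | ∀ i j : ℤ, i ≤ j → window x i j ∈ ⋃ a : K, GLang σ a}

end Gen

lemma substWord_cons {A : Type*} (σ : A → List A) (a : A) (w : List A) :
    substWord σ (a :: w) = σ a ++ substWord σ w := rfl

lemma substWord_append {A : Type*} (σ : A → List A) (w₁ w₂ : List A) :
    substWord σ (w₁ ++ w₂) = substWord σ w₁ ++ substWord σ w₂ := by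
  induction w₁ with
  | nil => simp [substWord]
  | cons a w ih => simp [substWord_cons, ih]

lemma substWord_iter_append {A : Type*} (σ : A → List A) (k : ℕ) (w₁ w₂ : List A) :
    (substWord σ)^[k] (w₁ ++ w₂) = (substWord σ)^[k] w₁ ++ (substWord σ)^[k] w₂ := by
  induction k generalizing w₁ w₂ with
  | zero => simp
  | succ k ih => simp [Function.iterate_succ_apply, substWord_append, ih]

lemma len_le_substWord {A : Type*} (σ : A → List A) (hne : ∀ a, σ a ≠ []) (w : List A) :
    w.length ≤ (substWord σ w).length := by
  induction w with
  | nil => simp [substWord]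
  | cons a w ih =>
    rw [substWord_cons, List.length_append]
    have : 1 ≤ (σ a).length := List.length_pos_iff.2 (hne a)
    simp only [List.length_cons]
    omega

lemma len_mono {A : Type*} (σ : A → List A) (hne : ∀ a, σ a ≠ []) (w : List A) :
    Monotone fun n => ((substWord σ)^[n] w).length := by
  apply monotone_nat_of_le_succ
  intro n
  rw [Function.iterate_succ_apply']
  exact len_le_substWord σ hne _

lemma two_mul_le {A : Type*} (σ : A → List A) (j : ℕ)
    (h2 : ∀ c : A, 2 ≤ ((substWord σ)^[j] [c]).length) (w : List A) :
    2 * w.length ≤ ((substWord σ)^[j] w).length := by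
  induction w with
  | nil => simp
  | cons a w ih =>
    have h1 := h2 a
    have h3 := ih
    rw [show (a :: w) = [a] ++ w from rfl, substWord_iter_append, List.length_append]
    simp only [List.length_cons, List.length_append, List.length_nil]
    omega

lemma two_le_length_of_mem {A : Type*} {l : List A} {x y : A}
    (hx : x ∈ l) (hy : y ∈ l) (h : x ≠ y) : 2 ≤ l.length := by
  match l with
  | [] => simp at hx
  | [z] =>
    simp at hx hy
    exact absurd (hx.trans hy.symm) h
  | a :: b :: t => simp [List.length_cons]


theorem stmt16 {K : Type*} [MetricSpace K] [CompactSpace K]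
    [TotallyDisconnectedSpace K] [Nontrivial K] [Inhabited K]
    (σ : K → List K) (hσ : IsGenSubst σ) (hprim : GPrimitive σ) :
    ∀ a : K, Tendsto (fun n : ℕ => ((substWord σ)^[n] [a]).length) atTop atTop := by
  intro a
  have hne : ∀ a, σ a ≠ [] := hσ.1
  obtain ⟨p, q, hpq⟩ := exists_pair_ne K
  set r := dist p q / 2 with hrdef
  have hr : 0 < r := by
    have := dist_pos.2 hpq
    positivity
  have hdisj : ∀ c : K, c ∈ Metric.ball p r → c ∈ Metric.ball q r → False := by
    intro c h1 h2
    rw [Metric.mem_ball] at h1 h2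
    have := dist_triangle p c q
    rw [dist_comm c p] at h1
    rw [dist_comm c q] at h2
    have : dist p q < r + r := lt_of_le_of_lt this (by linarith [dist_comm c q ▸ h2])
    rw [hrdef] at this
    linarith
  obtain ⟨j₁, h₁⟩ := hprim (Metric.ball p r) Metric.isOpen_ball ⟨p, Metric.mem_ball_self hr⟩
  obtain ⟨j₂, h₂⟩ := hprim (Metric.ball q r) Metric.isOpen_ball ⟨q, Metric.mem_ball_self hr⟩
  set j := max j₁ j₂ with hj
  have h2len : ∀ c : K, 2 ≤ ((substWord σ)^[j] [c]).length := by
    intro c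
    obtain ⟨c₁, hc₁m, hc₁⟩ := h₁ c j (le_max_left _ _)
    obtain ⟨c₂, hc₂m, hc₂⟩ := h₂ c j (le_max_right _ _)
    exact two_le_length_of_mem hc₁m hc₂m (fun h => hdisj c₁ hc₁ (h ▸ hc₂))
  have growth : ∀ m : ℕ, 2 ^ m ≤ ((substWord σ)^[j * m] [a]).length := by
    intro m
    induction m with
    | zero => simp
    | succ m ih =>
      have : j * (m + 1) = j + j * m := by ring
      rw [this, Function.iterate_add_apply]
      calc 2 ^ (m + 1) = 2 * 2 ^ m := by ring
        _ ≤ 2 * ((substWord σ)^[j * m] [a]).length := by omega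
        _ ≤ _ := two_mul_le σ j h2len _
  rw [tendsto_atTop]
  intro b
  refine eventually_atTop.2 ⟨j * b, fun n hn => ?_⟩
  calc b ≤ 2 ^ b := (Nat.lt_two_pow_self (n := b)).le
    _ ≤ ((substWord σ)^[j * b] [a]).length := growth b
    _ ≤ ((substWord σ)^[n] [a]).length := len_mono σ hne [a] hn
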